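/- arXiv:2301.07040 — 3 statements merged into one kernel-verified Lean document; each statement's English description precedes it below -/
import Mathlib

section
/- Let X = U Σ Vᵀ be the SVD of a rank-C matrix X ∈ ℝ^{C×M} with singular values λ₁ ≥ … ≥ λ_C > 0, where V ∈ ℝ^{M×C} has orthonormal columns. Suppose for a subset S ⊆ {1,…,M} of column indices, every unit vector x ∈ ℝ^C satisfies xᵀ X_{|S} X_{|S}ᵀ x ≥ α |S| C λ₁² / M, where X_{|S} is the submatrix of X restricted to columns in S. Then the minimum eigenvalue of V_Sᵀ V_S is at least α |S| C / M, where V_S is the submatrix of V restricted to the rows indexed by S. -/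
open Matrix BigOperators

private lemma quadform {m n : Type*} [Fintype m] [Fintype n]
    (A : Matrix m n ℝ) (x : n → ℝ) :
    x ⬝ᵥ (Aᵀ * A).mulVec x = A.mulVec x ⬝ᵥ A.mulVec x := by
  rw [← Matrix.mulVec_mulVec, Matrix.dotProduct_mulVec, Matrix.vecMul_transpose]

/-- If `X = U Σ Vᵀ` is the SVD of a full-row-rank matrix `X ∈ ℝ^{C×M}` and the
quadratic form of `X_{|S} X_{|S}ᵀ` is bounded below by `α|S|Cλ₁²/M` on unit
vectors, then the minimum eigenvalue of `V_Sᵀ V_S` is at least `α|S|C/M`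
(stated as a lower bound on the quadratic form over unit vectors). -/
theorem min_eig_V_of_quadratic_lower_bound {C M : ℕ} (hC : 0 < C) (hM : 0 < M)
    (X : Matrix (Fin C) (Fin M) ℝ) (U : Matrix (Fin C) (Fin C) ℝ)
    (lam : Fin C → ℝ) (V : Matrix (Fin M) (Fin C) ℝ)
    (hsvd : X = U * Matrix.diagonal lam * Vᵀ)
    (hU : Uᵀ * U = 1) (hV : Vᵀ * V = 1)
    (hpos : ∀ i, 0 < lam i)
    (hmono : ∀ i j : Fin C, i ≤ j → lam j ≤ lam i)
    (α : ℝ) (S : Finset (Fin M))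
    (hquad : ∀ x : Fin C → ℝ, (∑ i, x i ^ 2) = 1 →
      α * S.card * C * lam ⟨0, hC⟩ ^ 2 / M ≤
        x ⬝ᵥ ((X.submatrix id (fun j : S => (j : Fin M))) *
              (X.submatrix id (fun j : S => (j : Fin M)))ᵀ).mulVec x) :
    ∀ x : Fin C → ℝ, (∑ i, x i ^ 2) = 1 →
      α * S.card * C / M ≤
        x ⬝ᵥ ((V.submatrix (fun j : S => (j : Fin M)) id)ᵀ *
              V.submatrix (fun j : S => (j : Fin M)) id).mulVec x := by
  intro x hx
  set L : ℝ := lam ⟨0, hC⟩ with hL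
  have hLpos : 0 < L := hpos _
  set W : Matrix S (Fin C) ℝ := V.submatrix (fun j : S => (j : Fin M)) id with hWdef
  -- X restricted to S
  have hsub : X.submatrix id (fun j : S => (j : Fin M)) = U * Matrix.diagonal lam * Wᵀ := by
    rw [hsvd, ← Matrix.submatrix_mul_equiv (U * Matrix.diagonal lam) Vᵀ id (Equiv.refl _)
      (fun j : S => (j : Fin M))]
    simp [hWdef, Matrix.transpose_submatrix]
  set B : Matrix S (Fin C) ℝ := W * Matrix.diagonal lam * Uᵀ with hBdef
  have hXS : (X.submatrix id (fun j : S => (j : Fin M))) *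
      (X.submatrix id (fun j : S => (j : Fin M)))ᵀ = Bᵀ * B := by
    rw [hsub, hBdef]
    simp [Matrix.transpose_mul, Matrix.diagonal_transpose, Matrix.mul_assoc]
  -- the auxiliary vector
  set w : Fin C → ℝ := fun i => x i / lam i with hwdef
  set n2 : ℝ := ∑ i, (x i / lam i) ^ 2 with hn2def
  have hww : w ⬝ᵥ w = n2 := by
    simp [dotProduct, hwdef, hn2def, pow_two]
  have hn2low : 1 / L ^ 2 ≤ n2 := by
    have : ∑ i, x i ^ 2 / L ^ 2 ≤ n2 := by
      rw [hn2def]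
      apply Finset.sum_le_sum
      intro i _
      have h1 : lam i ≤ L := hmono ⟨0, hC⟩ i (Fin.mk_le_mk.mpr (Nat.zero_le _))
      rw [div_pow, div_le_div_iff₀ (by positivity) (pow_pos (hpos i) 2)]
      exact mul_le_mul_of_nonneg_left (by nlinarith [hpos i] : lam i ^ 2 ≤ L ^ 2)
        (sq_nonneg (x i))
    calc 1 / L ^ 2 = (∑ i, x i ^ 2) / L ^ 2 := by rw [hx]
    _ = ∑ i, x i ^ 2 / L ^ 2 := Finset.sum_div _ _ _
    _ ≤ n2 := this
  have hn2pos : 0 < n2 := lt_of_lt_of_le (by positivity) hn2low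
  set c : ℝ := (Real.sqrt n2)⁻¹ with hcdef
  have hsq : Real.sqrt n2 * Real.sqrt n2 = n2 := Real.mul_self_sqrt hn2pos.le
  have hsqpos : 0 < Real.sqrt n2 := Real.sqrt_pos.mpr hn2pos
  have hcc : c * c = n2⁻¹ := by
    rw [hcdef, ← mul_inv]
    exact congrArg Inv.inv hsq
  set y : Fin C → ℝ := c • U.mulVec w with hydef
  have hUtU : ∀ v : Fin C → ℝ, Uᵀ.mulVec (U.mulVec v) = v := by
    intro v; rw [Matrix.mulVec_mulVec, hU, Matrix.one_mulVec]
  have hnormU : U.mulVec w ⬝ᵥ U.mulVec w = n2 := by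
    rw [← quadform U w, hU, Matrix.one_mulVec, hww]
  have hy1 : (∑ i, y i ^ 2) = 1 := by
    have : (∑ i, y i ^ 2) = y ⬝ᵥ y := by simp [dotProduct, pow_two]
    rw [this, hydef, smul_dotProduct, dotProduct_smul, smul_eq_mul,
      smul_eq_mul, ← mul_assoc, hcc, hnormU]
    exact inv_mul_cancel₀ hn2pos.ne'
  -- Σ w = x
  have hdiagw : (Matrix.diagonal lam).mulVec w = x := by
    funext i
    have hne := (hpos i).ne'
    simp [Matrix.mulVec_diagonal, hwdef]
    field_simp
  have hBy : B.mulVec y = c • W.mulVec x := by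
    rw [hydef, Matrix.mulVec_smul, hBdef, ← Matrix.mulVec_mulVec, ← Matrix.mulVec_mulVec,
      hUtU, hdiagw]
  have hq := hquad y hy1
  rw [hXS, quadform, hBy, smul_dotProduct, dotProduct_smul, smul_eq_mul,
    smul_eq_mul, ← mul_assoc, hcc] at hq
  set T : ℝ := W.mulVec x ⬝ᵥ W.mulVec x with hTdef
  have hT0 : 0 ≤ T := by
    rw [hTdef]
    exact Finset.sum_nonneg fun i _ => mul_self_nonneg _
  rw [quadform]
  show α * S.card * C / M ≤ T
  have hqq : α * S.card * C / M * L ^ 2 * n2 ≤ T := by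
    have h1 := mul_le_mul_of_nonneg_right hq hn2pos.le
    have h2 : n2⁻¹ * T * n2 = T := by field_simp
    have h3 : α * S.card * C / M * L ^ 2 * n2 = α * ↑S.card * ↑C * L ^ 2 / ↑M * n2 := by
      ring
    linarith
  rcases le_or_gt 0 (α * S.card * C / M) with h | h
  · have h1 : α * S.card * C / M * L ^ 2 * (1 / L ^ 2) ≤ α * S.card * C / M * L ^ 2 * n2 :=
      mul_le_mul_of_nonneg_left hn2low (mul_nonneg h (sq_nonneg L))
    have h2 : α * S.card * C / M * L ^ 2 * (1 / L ^ 2) = α * S.card * C / M := by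
      field_simp
    linarith
  · linarith
end

section
/- Let P̃, P ∈ ℝ^{N×M} satisfy ‖P̃ − P‖_∞ ≤ Δ entrywise on the columns in a set N₀, and define for each row u the set T_u = { j ∈ N₀ : max_{j'∈N₀} P̃_{u j'} − P̃_{u j} ≤ 2Δ }. Suppose rows u and v satisfy: (i) T_u ∩ T_v ≠ ∅, and (ii) |P̃_{u x} − P̃_{v x}| ≤ 2Δ for all x ∈ N₀. Then for all x ∈ T_u and y ∈ T_v, |P_{u x} − P_{u y}| ≤ 16Δ and |P_{v x} − P_{v y}| ≤ 16Δ. -/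
open Matrix BigOperators

/-- If two users `u, v` have overlapping sets of good arms and close estimated
rewards on all active arms, then any good arm of `u` and any good arm of `v`
have true rewards within `16Δ` of each other (for both users). -/
theorem good_arms_of_adjacent_users {N M : ℕ}
    (Pt P : Matrix (Fin N) (Fin M) ℝ) (Δ : ℝ) (hΔ : 0 < Δ)
    (N0 : Finset (Fin M)) (hne : N0.Nonempty)
    (hb : ∀ i : Fin N, ∀ j ∈ N0, |Pt i j - P i j| ≤ Δ)
    (T : Fin N → Finset (Fin M))
    (hT : ∀ w, T w = N0.filter fun j =>
      N0.sup' hne (fun j' => Pt w j') - Pt w j ≤ 2 * Δ)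
    (u v : Fin N)
    (h1 : (T u ∩ T v).Nonempty)
    (h2 : ∀ x ∈ N0, |Pt u x - Pt v x| ≤ 2 * Δ) :
    ∀ x ∈ T u, ∀ y ∈ T v,
      |P u x - P u y| ≤ 16 * Δ ∧ |P v x - P v y| ≤ 16 * Δ := by
  have key : ∀ w : Fin N, ∀ a ∈ T w,
      a ∈ N0 ∧ N0.sup' hne (fun j' => Pt w j') - Pt w a ≤ 2 * Δ ∧
        Pt w a ≤ N0.sup' hne (fun j' => Pt w j') := by
    intro w a ha
    rw [hT w, Finset.mem_filter] at ha
    exact ⟨ha.1, ha.2, Finset.le_sup' _ ha.1⟩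
  intro x hx y hy
  obtain ⟨z, hz⟩ := h1
  rw [Finset.mem_inter] at hz
  obtain ⟨hxN, hxs, hxs'⟩ := key u x hx
  obtain ⟨hyN, hys, hys'⟩ := key v y hy
  obtain ⟨hzNu, hzus, hzus'⟩ := key u z hz.1
  obtain ⟨hzNv, hzvs, hzvs'⟩ := key v z hz.2
  have h2z := abs_le.mp (h2 z hzNu)
  have h2x := abs_le.mp (h2 x hxN)
  have h2y := abs_le.mp (h2 y hyN)
  have bux := abs_le.mp (hb u x hxN)
  have buy := abs_le.mp (hb u y hyN)
  have bvx := abs_le.mp (hb v x hxN)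
  have bvy := abs_le.mp (hb v y hyN)
  constructor <;> rw [abs_le] <;> constructor <;> linarith
end

section
/- Under the setting of the previous lemma, consider a graph on rows where u and v are joined by an edge iff T_u ∩ T_v ≠ ∅ and |P̃_{u x} − P̃_{v x}| ≤ 2Δ for all x ∈ N₀. If rows u and v are connected by a path a₁ = u, a₂, …, a_L = v of length L in this graph, then for all x ∈ T_u and y ∈ T_v, |P_{u x} − P_{u y}| ≤ 16LΔ. -/
open Matrix BigOperators

/-- If rows `u` and `v` are connected by a path of length `L` in the graph
where two rows are adjacent iff their good-arm sets intersect and their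
estimated rewards agree within `2Δ` on all active arms, then any good arm of
`u` and any good arm of `v` have true rewards within `16LΔ` for user `u`. -/
theorem good_arms_along_path {N M : ℕ}
    (Pt P : Matrix (Fin N) (Fin M) ℝ) (Δ : ℝ) (hΔ : 0 < Δ)
    (N0 : Finset (Fin M)) (hne : N0.Nonempty)
    (hb : ∀ i : Fin N, ∀ j ∈ N0, |Pt i j - P i j| ≤ Δ)
    (T : Fin N → Finset (Fin M))
    (hT : ∀ w, T w = N0.filter fun j =>
      N0.sup' hne (fun j' => Pt w j') - Pt w j ≤ 2 * Δ)
    (adj : Fin N → Fin N → Prop)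
    (hadj : ∀ w w', adj w w' ↔
      ((T w ∩ T w').Nonempty ∧ ∀ x ∈ N0, |Pt w x - Pt w' x| ≤ 2 * Δ))
    (u v : Fin N) (L : ℕ) (hL : 0 < L)
    (a : ℕ → Fin N) (ha0 : a 0 = u) (haL : a (L - 1) = v)
    (hpath : ∀ i : ℕ, i + 1 < L → adj (a i) (a (i + 1))) :
    ∀ x ∈ T u, ∀ y ∈ T v, |P u x - P u y| ≤ 16 * L * Δ := by
  intro x hx y hy
  have hsub : ∀ w, T w ⊆ N0 := by
    intro w; rw [hT w]; exact Finset.filter_subset _ _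
  have hpair : ∀ w, ∀ p ∈ T w, ∀ q ∈ T w, |Pt w p - Pt w q| ≤ 2 * Δ := by
    intro w p hp q hq
    rw [hT w, Finset.mem_filter] at hp hq
    have hps : Pt w p ≤ N0.sup' hne fun j' => Pt w j' := Finset.le_sup' _ hp.1
    have hqs : Pt w q ≤ N0.sup' hne fun j' => Pt w j' := Finset.le_sup' _ hq.1
    rw [abs_sub_le_iff]
    constructor <;> linarith [hp.2, hq.2]
  have claim1 : ∀ i, i < L → ∀ z ∈ T (a i),
      |Pt u x - Pt (a i) z| ≤ (4 * (i : ℝ) + 2) * Δ := by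
    intro i
    induction i with
    | zero =>
      intro _ z hz
      have := hpair u x hx z (by rwa [ha0] at hz)
      rw [ha0]
      push_cast
      linarith
    | succ n ih =>
      intro hi z hz
      have hn : n < L := by omega
      obtain ⟨⟨c, hc⟩, hall⟩ := (hadj (a n) (a (n + 1))).mp (hpath n hi)
      rw [Finset.mem_inter] at hc
      have h1 := ih hn c hc.1
      have h2 := hall c (hsub _ hc.2)
      have h3 := hpair (a (n + 1)) c hc.2 z hz
      have t1 := abs_sub (Pt u x - Pt (a n) c) (Pt (a (n+1)) c - Pt (a n) c)
      have t2 : |Pt u x - Pt (a (n+1)) c| ≤ (4 * (n:ℝ) + 2) * Δ + 2 * Δ := by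
        have := abs_sub_le (Pt u x) (Pt (a n) c) (Pt (a (n+1)) c)
        have habs : |Pt (a n) c - Pt (a (n+1)) c| ≤ 2 * Δ := h2
        linarith
      have := abs_sub_le (Pt u x) (Pt (a (n+1)) c) (Pt (a (n+1)) z)
      push_cast
      linarith
  have claim2 : ∀ i, i < L → ∀ q ∈ N0,
      |Pt (a i) q - Pt u q| ≤ 2 * (i : ℝ) * Δ := by
    intro i
    induction i with
    | zero =>
      intro _ q hq
      rw [ha0]
      simp
    | succ n ih =>
      intro hi q hq
      have hn : n < L := by omega
      obtain ⟨_, hall⟩ := (hadj (a n) (a (n + 1))).mp (hpath n hi)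
      have h1 := ih hn q hq
      have h2 := hall q hq
      have := abs_sub_le (Pt (a (n+1)) q) (Pt (a n) q) (Pt u q)
      have habs : |Pt (a (n+1)) q - Pt (a n) q| ≤ 2 * Δ := by
        rw [abs_sub_comm]; exact h2
      push_cast
      linarith
  have hLlt : L - 1 < L := by omega
  have hy' : y ∈ T (a (L - 1)) := by rwa [haL]
  have c1 := claim1 (L - 1) hLlt y hy'
  have c2 := claim2 (L - 1) hLlt y (hsub _ hy)
  rw [haL] at c2
  have hbx := hb u x (hsub _ hx)
  have hby := hb u y (hsub _ hy)
  have hcast : ((L - 1 : ℕ) : ℝ) = (L : ℝ) - 1 := by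
    push_cast [Nat.cast_sub hL]; ring
  rw [hcast] at c1 c2
  rw [haL] at c1
  have hL1 : (1 : ℝ) ≤ (L : ℝ) := by exact_mod_cast hL
  have t1 := abs_sub_le (P u x) (Pt u x) (Pt u y)
  have t2 := abs_sub_le (P u x) (Pt u y) (P u y)
  have t3 := abs_sub_le (Pt u x) (Pt (a (L-1)) y) (Pt u y)
  rw [haL] at t3
  have hbx' : |P u x - Pt u x| ≤ Δ := by rw [abs_sub_comm]; exact hbx
  nlinarith [hΔ.le, mul_nonneg (sub_nonneg.mpr hL1) hΔ.le]
end
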